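/- The maps ν ↦ U_ν and U ↦ ν_U are mutually inverse: (1) for every anti-norm ν on ℝⁿ, the anti-norm associated to its unit ball satisfies ν_{U_ν} = ν; (2) for every set U ⊆ ℝⁿ that is nonempty, closed, convex, does not contain the origin, and satisfies λU ⊆ U for all λ ≥ 1, the unit ball of the associated anti-norm satisfies U_{ν_U} = U. -/

import Mathlib

open scoped Pointwise
open Filter Topology

/-- An anti-norm on a real normed space `E`: a function `ν : E → ℝ ∪ {−∞}`
(encoded as an `EReal`-valued function never equal to `+∞`) that is concave,
upper semicontinuous (closed hypograph), positively homogeneous, has nonempty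
effective domain, and is positive on the relative interior of its domain. -/
structure IsAntinorm {E : Type*} [NormedAddCommGroup E] [NormedSpace ℝ E]
    (ν : E → EReal) : Prop where
  ne_top : ∀ ξ, ν ξ ≠ ⊤
  concave : ∀ ξ η : E, ∀ a b : ℝ, 0 ≤ a → 0 ≤ b → a + b = 1 →
    (a : EReal) * ν ξ + (b : EReal) * ν η ≤ ν (a • ξ + b • η)
  closed_hypograph : IsClosed {p : E × ℝ | (p.2 : EReal) ≤ ν p.1}
  pos_homog : ∀ c : ℝ, 0 ≤ c → ∀ ξ : E, ν (c • ξ) = (c : EReal) * ν ξ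
  dom_nonempty : {ξ : E | ν ξ ≠ ⊥}.Nonempty
  pos_on_ri : ∀ ξ ∈ intrinsicInterior ℝ {ξ : E | ν ξ ≠ ⊥}, 0 < ν ξ

/-- `ν̊_U(ξ) = sup{λ > 0 : ξ ∈ λU}`, with `sup ∅ = −∞` (in `EReal`). -/
noncomputable def preAntinorm {E : Type*} [NormedAddCommGroup E]
    [NormedSpace ℝ E] (U : Set E) (ξ : E) : EReal :=
  sSup {l : EReal | ∃ r : ℝ, 0 < r ∧ ξ ∈ r • U ∧ l = (r : EReal)}

/-- `ν_U(ξ) = limsup_{η → ξ} ν̊_U(η)`, the upper semicontinuous hull. -/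
noncomputable def antinormOf {E : Type*} [NormedAddCommGroup E]
    [NormedSpace ℝ E] (U : Set E) (ξ : E) : EReal :=
  limsup (preAntinorm U) (𝓝 ξ)

section Aux

open Set

/-- A convex combination (with positive weight on the intrinsic-interior point) of a point in
the intrinsic interior of a convex set containing `0` and a point of the set lies in the
intrinsic interior. -/
lemma my_intrinsic_combo {E : Type*} [NormedAddCommGroup E] [NormedSpace ℝ E] {s : Set E}
    (hs : Convex ℝ s) (h0 : (0:E) ∈ s) {x y : E}
    (hx : x ∈ intrinsicInterior ℝ s) (hy : y ∈ s) {a b : ℝ}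
    (ha : 0 < a) (hb : 0 ≤ b) (hab : a + b = 1) :
    a • x + b • y ∈ intrinsicInterior ℝ s := by
  have hset : ((affineSpan ℝ s : Set E)) = ((Submodule.span ℝ s : Set E)) := by
    rw [← affineSpan_insert_zero, insert_eq_self.mpr h0]
  have hmemW : ∀ u : E, u ∈ affineSpan ℝ s → u ∈ Submodule.span ℝ s := by
    intro u hu
    have : u ∈ ((affineSpan ℝ s : Set E)) := hu
    rw [hset] at this; exact this
  have hmemA : ∀ u : E, u ∈ Submodule.span ℝ s → u ∈ affineSpan ℝ s := by
    intro u hu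
    have : u ∈ ((Submodule.span ℝ s : Set E)) := hu
    rw [← hset] at this; exact this
  let e : ↥(affineSpan ℝ s) ≃ₜ ↥(Submodule.span ℝ s) :=
    { toFun := fun u => ⟨u.1, hmemW u.1 u.2⟩
      invFun := fun u => ⟨u.1, hmemA u.1 u.2⟩
      left_inv := fun u => rfl
      right_inv := fun u => rfl
      continuous_toFun := continuous_subtype_val.subtype_mk _
      continuous_invFun := continuous_subtype_val.subtype_mk _ }
  set sA : Set ↥(affineSpan ℝ s) := Subtype.val ⁻¹' s with hsA
  set sB : Set ↥(Submodule.span ℝ s) := Subtype.val ⁻¹' s with hsB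
  have himg : e '' sA = sB := by
    ext w
    constructor
    · rintro ⟨z, hz, rfl⟩; exact hz
    · intro hw; exact ⟨e.symm w, hw, e.apply_symm_apply w⟩
  have hconv : Convex ℝ sB := hs.linear_preimage (Submodule.span ℝ s).subtype
  obtain ⟨z, hz, rfl⟩ := hx
  have hz' : e z ∈ interior sB := by
    rw [← himg, ← e.image_interior]
    exact ⟨z, hz, rfl⟩
  have hy' : (⟨y, Submodule.subset_span hy⟩ : ↥(Submodule.span ℝ s)) ∈ sB := hy
  have hcombo := hconv.combo_interior_self_mem_interior hz' hy' ha hb hab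
  have : (a • e z + b • (⟨y, Submodule.subset_span hy⟩ : ↥(Submodule.span ℝ s))) ∈
      e '' (interior sA) := by
    rw [e.image_interior, himg]
    exact hcombo
  obtain ⟨zc, hzc, hzce⟩ := this
  refine ⟨zc, hzc, ?_⟩
  have h1 := congrArg Subtype.val hzce
  have h2 : ((e zc : ↥(Submodule.span ℝ s)) : E) = (zc : E) := rfl
  have h3 : ((e z : ↥(Submodule.span ℝ s)) : E) = (z : E) := rfl
  simpa [h2, h3] using h1

variable {E : Type*} [NormedAddCommGroup E] [NormedSpace ℝ E] {ν : E → EReal}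

lemma my_nu_zero (hν : IsAntinorm ν) : ν 0 = 0 := by
  obtain ⟨ξ0, _⟩ := hν.dom_nonempty
  have := hν.pos_homog 0 le_rfl ξ0
  simpa using this

lemma my_closed_slice (hν : IsAntinorm ν) (r : ℝ) :
    IsClosed {η : E | (r : EReal) ≤ ν η} := by
  have : {η : E | (r : EReal) ≤ ν η}
      = (fun η : E => (η, r)) ⁻¹' {p : E × ℝ | (p.2 : EReal) ≤ ν p.1} := rfl
  rw [this]
  exact hν.closed_hypograph.preimage (by fun_prop)

lemma my_usc_limsup (hν : IsAntinorm ν) (ξ : E) : limsup ν (𝓝 ξ) ≤ ν ξ := by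
  by_contra h
  push_neg at h
  obtain ⟨r, hr1, hr2⟩ := EReal.exists_between_coe_real h
  have hfreq : ∃ᶠ η in 𝓝 ξ, (r : EReal) < ν η :=
    Filter.frequently_lt_of_lt_limsup (by isBoundedDefault) hr2
  have : ξ ∈ closure {η : E | (r : EReal) ≤ ν η} :=
    mem_closure_iff_frequently.mpr (hfreq.mono fun η hη => le_of_lt hη)
  rw [(my_closed_slice hν r).closure_eq] at this
  exact absurd hr1 (not_lt.mpr this)

lemma my_dom_convex (hν : IsAntinorm ν) : Convex ℝ {ξ : E | ν ξ ≠ ⊥} := by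
  intro ξ hξ η hη a b ha hb hab
  have h := hν.concave ξ η a b ha hb hab
  simp only [Set.mem_setOf_eq] at hξ hη ⊢
  intro hbot
  rw [hbot, le_bot_iff] at h
  have h1 := EReal.coe_toReal (hν.ne_top ξ) hξ
  have h2 := EReal.coe_toReal (hν.ne_top η) hη
  rw [← h1, ← h2, ← EReal.coe_mul, ← EReal.coe_mul, ← EReal.coe_add] at h
  exact EReal.coe_ne_bot _ h

lemma my_pre_le_nu (hν : IsAntinorm ν) (ξ : E) :
    preAntinorm {η : E | 1 ≤ ν η} ξ ≤ ν ξ := by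
  apply sSup_le
  rintro l ⟨r, hr, hmem, rfl⟩
  obtain ⟨u, hu, rfl⟩ := hmem
  rw [hν.pos_homog r hr.le u]
  calc (r : EReal) = (r : EReal) * 1 := (mul_one _).symm
    _ ≤ (r : EReal) * ν u := mul_le_mul_of_nonneg_left hu (by exact_mod_cast hr.le)

lemma my_pre_eq_nu (hν : IsAntinorm ν) {ξ : E} (h : 0 < ν ξ) :
    preAntinorm {η : E | 1 ≤ ν η} ξ = ν ξ := by
  refine le_antisymm (my_pre_le_nu hν ξ) ?_
  set x := (ν ξ).toReal with hx
  have hnb : ν ξ ≠ ⊥ := by rintro hb; rw [hb] at h; exact absurd h (by simp)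
  have hcoe : ν ξ = (x : EReal) := (EReal.coe_toReal (hν.ne_top ξ) hnb).symm
  have hxpos : 0 < x := by rw [hcoe] at h; exact_mod_cast h
  rw [hcoe]
  apply le_sSup
  refine ⟨x, hxpos, ?_, rfl⟩
  rw [Set.mem_smul_set_iff_inv_smul_mem₀ (ne_of_gt hxpos)]
  have : ν (x⁻¹ • ξ) = ((x⁻¹ : ℝ) : EReal) * ν ξ := hν.pos_homog _ (by positivity) ξ
  rw [Set.mem_setOf_eq, this, hcoe, ← EReal.coe_mul, inv_mul_cancel₀ (ne_of_gt hxpos)]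
  exact le_rfl

lemma my_pre_bot_of_neg (hν : IsAntinorm ν) {ξ : E} (h : ¬ (0 : EReal) ≤ ν ξ) :
    preAntinorm {η : E | 1 ≤ ν η} ξ = ⊥ := by
  have : {l : EReal | ∃ r : ℝ, 0 < r ∧ ξ ∈ r • {η : E | 1 ≤ ν η} ∧ l = (r : EReal)} = ∅ := by
    ext l
    simp only [Set.mem_setOf_eq, Set.mem_empty_iff_false, iff_false]
    rintro ⟨r, hr, hmem, rfl⟩
    obtain ⟨u, hu, rfl⟩ := hmem
    apply h
    rw [hν.pos_homog r hr.le u]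
    calc (0 : EReal) ≤ (r : EReal) * 1 := by simp [hr.le]
      _ ≤ (r : EReal) * ν u := mul_le_mul_of_nonneg_left hu (by exact_mod_cast hr.le)
  rw [preAntinorm, this, sSup_empty]

lemma my_nonneg_on_dom [FiniteDimensional ℝ E] (hν : IsAntinorm ν)
    {ξ : E} (hξ : ν ξ ≠ ⊥) : (0 : EReal) ≤ ν ξ := by
  have h0dom : (0:E) ∈ {ξ : E | ν ξ ≠ ⊥} := by
    simp [Set.mem_setOf_eq, my_nu_zero hν]
  obtain ⟨η₀, hη₀⟩ :=
    Set.Nonempty.intrinsicInterior (my_dom_convex hν) ⟨0, h0dom⟩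
  have hmem : ∀ t : ℝ, t ∈ Set.Ico (0:ℝ) 1 →
      ((0:ℝ):EReal) ≤ ν ((1-t) • η₀ + t • ξ) := by
    intro t ht
    have hri := my_intrinsic_combo (my_dom_convex hν) h0dom hη₀ hξ
      (by linarith [ht.2] : (0:ℝ) < 1 - t) ht.1 (by ring)
    exact le_of_lt (hν.pos_on_ri _ hri)
  have htend : Tendsto (fun t : ℝ => (1-t) • η₀ + t • ξ) (𝓝[<] (1:ℝ)) (𝓝 ξ) := by
    have hc : Continuous (fun t : ℝ => (1-t) • η₀ + t • ξ) := by fun_prop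
    have := hc.tendsto 1
    simp only [sub_self, zero_smul, one_smul, zero_add] at this
    exact this.mono_left nhdsWithin_le_nhds
  have hev : ∀ᶠ t in 𝓝[<] (1:ℝ),
      ((1-t) • η₀ + t • ξ) ∈ {η : E | ((0:ℝ):EReal) ≤ ν η} := by
    filter_upwards [Ico_mem_nhdsLT_of_mem (Set.mem_Ioc.mpr ⟨zero_lt_one, le_rfl⟩)] with t ht
    exact hmem t ht
  have := (my_closed_slice hν 0).mem_of_tendsto htend hev
  simpa using this

lemma my_part1 [FiniteDimensional ℝ E] (hν : IsAntinorm ν) :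
    antinormOf {ξ : E | 1 ≤ ν ξ} = ν := by
  have h0dom : (0:E) ∈ {ξ : E | ν ξ ≠ ⊥} := by
    simp [Set.mem_setOf_eq, my_nu_zero hν]
  obtain ⟨η₀, hη₀⟩ :=
    Set.Nonempty.intrinsicInterior (my_dom_convex hν) ⟨0, h0dom⟩
  have hη₀pos : 0 < ν η₀ := hν.pos_on_ri _ hη₀
  have hη₀nb : ν η₀ ≠ ⊥ := by
    rintro hb; rw [hb] at hη₀pos; exact absurd hη₀pos (by simp)
  set c : ℝ := (ν η₀).toReal with hc
  have hν₀ : ν η₀ = (c : EReal) := (EReal.coe_toReal (hν.ne_top η₀) hη₀nb).symm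
  have hcpos : 0 < c := by rw [hν₀] at hη₀pos; exact_mod_cast hη₀pos
  funext ξ
  have hupper : antinormOf {ξ : E | 1 ≤ ν ξ} ξ ≤ ν ξ :=
    le_trans (limsup_le_limsup (Eventually.of_forall (my_pre_le_nu hν)))
      (my_usc_limsup hν ξ)
  rcases eq_or_ne (ν ξ) ⊥ with hbot | hnb
  · -- case ν ξ = ⊥
    rw [hbot]
    have hopen : IsOpen {η : E | ¬ ((0:ℝ):EReal) ≤ ν η} := by
      have : {η : E | ¬ ((0:ℝ):EReal) ≤ ν η} = {η : E | ((0:ℝ):EReal) ≤ ν η}ᶜ := rfl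
      rw [this]; exact (my_closed_slice hν 0).isOpen_compl
    have hmem : ξ ∈ {η : E | ¬ ((0:ℝ):EReal) ≤ ν η} := by simp [hbot]
    have hev : ∀ᶠ η in 𝓝 ξ, preAntinorm {ξ : E | 1 ≤ ν ξ} η = (⊥ : EReal) := by
      filter_upwards [hopen.mem_nhds hmem] with η hη
      exact my_pre_bot_of_neg hν (by simpa using hη)
    calc antinormOf {ξ : E | 1 ≤ ν ξ} ξ = limsup (fun _ => (⊥:EReal)) (𝓝 ξ) :=
          limsup_congr hev
      _ = ⊥ := limsup_const _
  · have hnn : (0:EReal) ≤ ν ξ := my_nonneg_on_dom hν hnb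
    rcases hnn.eq_or_lt with hz | hpos
    · -- case ν ξ = 0
      refine le_antisymm (by rw [← hz] at hupper ⊢; exact hupper) ?_
      rw [← hz]
      set φ : ℝ → E := fun t => (1-t) • ξ + t • η₀ with hφ
      have htend : Tendsto φ (𝓝[>] (0:ℝ)) (𝓝 ξ) := by
        have hcont : Continuous φ := by fun_prop
        have := hcont.tendsto 0
        simp only [hφ, sub_zero, one_smul, zero_smul, add_zero] at this
        exact this.mono_left nhdsWithin_le_nhds
      have hfreq0 : ∃ᶠ t in 𝓝[>] (0:ℝ),
          (0:EReal) ≤ preAntinorm {ξ : E | 1 ≤ ν ξ} (φ t) := by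
        apply Filter.Eventually.frequently
        filter_upwards [Ioo_mem_nhdsGT_of_mem (Set.mem_Ico.mpr ⟨le_rfl, zero_lt_one⟩)]
          with t ht
        have h1 := hν.concave ξ η₀ (1-t) t (by linarith [ht.2]) ht.1.le (by ring)
        rw [← hz, mul_zero, zero_add, hν₀, ← EReal.coe_mul] at h1
        have hφpos : 0 < ν (φ t) :=
          lt_of_lt_of_le (by exact_mod_cast mul_pos ht.1 hcpos) h1
        rw [my_pre_eq_nu hν hφpos]
        exact le_of_lt hφpos
      exact le_limsup_of_frequently_le (htend.frequently hfreq0)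
    · -- case 0 < ν ξ
      refine le_antisymm hupper ?_
      refine le_limsup_of_frequently_le (Filter.frequently_iff.mpr ?_)
      intro V hV
      exact ⟨ξ, mem_of_mem_nhds hV, le_of_eq (my_pre_eq_nu hν hpos).symm⟩

lemma my_part2 {U : Set E} (hne : U.Nonempty) (hcl : IsClosed U) (hcv : Convex ℝ U)
    (h0 : (0:E) ∉ U) (hray : ∀ c : ℝ, 1 ≤ c → c • U ⊆ U) :
    {ξ : E | 1 ≤ antinormOf U ξ} = U := by
  ext ξ
  simp only [Set.mem_setOf_eq]
  constructor
  · intro h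
    rw [← hcl.closure_eq]
    rw [Metric.mem_closure_iff]
    intro δ hδ
    set ε : ℝ := min (1/2) (δ/(8*(‖ξ‖+1))) with hε
    have hεpos : 0 < ε := by
      apply lt_min (by norm_num)
      positivity
    have hε1 : ε ≤ 1/2 := min_le_left _ _
    have hε2 : ε ≤ δ/(8*(‖ξ‖+1)) := min_le_right _ _
    have hlt : ((1 - ε : ℝ) : EReal) < antinormOf U ξ := by
      apply lt_of_lt_of_le _ h
      have : (1 - ε : ℝ) < 1 := by linarith
      exact_mod_cast this
    have hfreq : ∃ᶠ η in 𝓝 ξ, ((1 - ε : ℝ) : EReal) < preAntinorm U η :=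
      Filter.frequently_lt_of_lt_limsup (by isBoundedDefault) hlt
    obtain ⟨η, hηball, hηlt⟩ := Filter.frequently_iff.mp hfreq
      (Metric.ball_mem_nhds ξ (by positivity : (0:ℝ) < δ/4))
    obtain ⟨l, ⟨r, hr0, hrU, rfl⟩, hrlt⟩ := lt_sSup_iff.mp hηlt
    have hr1 : 1 - ε < r := by exact_mod_cast hrlt
    rcases le_or_gt 1 r with hge | hlt1
    · exact ⟨η, hray r hge hrU,
        lt_trans (by simpa [dist_comm] using hηball) (by linarith)⟩
    · have huU : r⁻¹ • η ∈ U := by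
        rwa [← Set.mem_smul_set_iff_inv_smul_mem₀ (ne_of_gt hr0)]
      refine ⟨r⁻¹ • η, huU, ?_⟩
      have hd : dist η ξ < δ/4 := by simpa using hηball
      set i := r⁻¹ with hi
      have hri : r * i = 1 := mul_inv_cancel₀ (ne_of_gt hr0)
      have hrhalf : (1:ℝ)/2 ≤ r := by linarith
      have hipos : 0 < i := by positivity
      have hi2 : i ≤ 2 := by nlinarith
      have hi1 : i - 1 ≤ 2 * ε := by nlinarith
      have hsplit : i • η - ξ = i • (η - ξ) + (i - 1) • ξ := by module
      have hbound : dist ξ (i • η) ≤ i * dist η ξ + (i - 1) * ‖ξ‖ := by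
        rw [dist_comm, dist_eq_norm, hsplit]
        calc ‖i • (η - ξ) + (i - 1) • ξ‖ ≤ ‖i • (η - ξ)‖ + ‖(i - 1) • ξ‖ := norm_add_le _ _
          _ = |i| * ‖η - ξ‖ + |i - 1| * ‖ξ‖ := by
              rw [norm_smul, norm_smul, Real.norm_eq_abs, Real.norm_eq_abs]
          _ ≤ i * dist η ξ + (i - 1) * ‖ξ‖ := by
              rw [dist_eq_norm]
              have h1 : |i| = i := abs_of_pos hipos
              have h2 : |i - 1| = i - 1 := abs_of_nonneg (by nlinarith)
              rw [h1, h2]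
      have hnorm : (0:ℝ) ≤ ‖ξ‖ := norm_nonneg _
      have hεξ : 2 * ε * ‖ξ‖ ≤ δ/4 := by
        have : ε * (‖ξ‖+1) ≤ δ/8 := by
          calc ε * (‖ξ‖+1) ≤ (δ/(8*(‖ξ‖+1))) * (‖ξ‖+1) := by nlinarith
            _ = δ/8 := by field_simp
        nlinarith
      calc dist ξ (i • η) ≤ i * dist η ξ + (i - 1) * ‖ξ‖ := hbound
        _ ≤ 2 * (δ/4) + 2 * ε * ‖ξ‖ := by nlinarith
        _ ≤ δ/2 + δ/4 := by nlinarith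
        _ < δ := by linarith
  · intro hξU
    have hpre : (1 : EReal) ≤ preAntinorm U ξ := by
      apply le_sSup
      exact ⟨1, one_pos, by simpa using hξU, rfl⟩
    refine le_limsup_of_frequently_le (Filter.frequently_iff.mpr ?_)
    intro V hV
    exact ⟨ξ, mem_of_mem_nhds hV, hpre⟩

end Aux

/-- The maps `ν ↦ U_ν` and `U ↦ ν_U` are mutually inverse: for any anti-norm
`ν` on `ℝⁿ`, `ν_{U_ν} = ν`; and for any nonempty closed convex `U ⊆ ℝⁿ` not
containing the origin and with the ray property, `U_{ν_U} = U`. -/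
theorem antinorm_ball_mutually_inverse {n : ℕ} :
    (∀ ν : EuclideanSpace ℝ (Fin n) → EReal, IsAntinorm ν →
        antinormOf {ξ | 1 ≤ ν ξ} = ν) ∧
      (∀ U : Set (EuclideanSpace ℝ (Fin n)), U.Nonempty → IsClosed U →
        Convex ℝ U → (0 : EuclideanSpace ℝ (Fin n)) ∉ U →
        (∀ c : ℝ, 1 ≤ c → c • U ⊆ U) →
        {ξ | 1 ≤ antinormOf U ξ} = U) := by
  constructor
  · intro ν hν
    exact my_part1 hν
  · intro U hne hcl hcv h0 hray
    exact my_part2 hne hcl hcv h0 hray
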